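/- Let g₁, g₂ : Ω → 𝔻 be nowhere-holomorphic C² functions on a simply connected open domain Ω ⊆ ℂ satisfying (CP) and (Ge1), let f := −2i·conj(F), φ := f·(1 + g₁g₂, i(1 − g₁g₂), g₁ − g₂, −i(g₁ + g₂)), and let X : Ω → ℝ⁴ satisfy X_z = φ, with Λ² := 4|f|²(1+|g₁|²)(1+|g₂|²). Then the mean curvature vector H := (4/Λ²)·X_{zz̄} of the conformal immersion X equals the component of the constant vector −e₄ = (0,0,0,−1) orthogonal to the tangent plane: H = −e₄ + (1/Λ²)[⟨X_u, e₄⟩·X_u + ⟨X_v, e₄⟩·X_v] at every point of Ω. In particular, the image surface is a translating soliton of the mean curvature flow with translating velocity −e₄. -/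

import Mathlib

open Complex ComplexConjugate

/-- Wirtinger derivative `∂h/∂z = ½(∂h/∂u − i ∂h/∂v)` of a map `h : ℂ → ℂ`. -/
noncomputable def wz (h : ℂ → ℂ) (z : ℂ) : ℂ :=
  (1 / 2) * (fderiv ℝ h z 1 - Complex.I * fderiv ℝ h z Complex.I)

/-- Wirtinger derivative `∂h/∂z̄ = ½(∂h/∂u + i ∂h/∂v)` of a map `h : ℂ → ℂ`. -/
noncomputable def wzb (h : ℂ → ℂ) (z : ℂ) : ℂ :=
  (1 / 2) * (fderiv ℝ h z 1 + Complex.I * fderiv ℝ h z Complex.I)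

/-- Wirtinger derivative `∂x/∂z` of a real-valued map `x : ℂ → ℝ`. -/
noncomputable def wzR (x : ℂ → ℝ) (z : ℂ) : ℂ :=
  (1 / 2) * (((fderiv ℝ x z 1 : ℝ) : ℂ) - Complex.I * ((fderiv ℝ x z Complex.I : ℝ) : ℂ))

/-- The function `F` appearing in the compatibility condition (CP). -/
noncomputable def Ffun (g₁ g₂ : ℂ → ℂ) (z : ℂ) : ℂ :=
  wzb g₁ z / ((1 - g₁ z * conj (g₂ z)) * (1 + (Complex.normSq (g₁ z) : ℂ)))

/-- The compatibility condition (CP) at a point `z`. -/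
def CP (g₁ g₂ : ℂ → ℂ) (z : ℂ) : Prop :=
  Ffun g₁ g₂ z = wzb g₂ z / ((1 - conj (g₁ z) * g₂ z) * (1 + (Complex.normSq (g₂ z) : ℂ)))

/-- The integrability condition (Ge1) at a point `z`. -/
def Ge1 (g₁ g₂ : ℂ → ℂ) (z : ℂ) : Prop :=
  0 = wz (wzb g₁) z
      + (conj (g₂ z) / (1 - g₁ z * conj (g₂ z))
          - conj (g₁ z) / (1 + (Complex.normSq (g₁ z) : ℂ))) * wz g₁ z * wzb g₁ z
      + ((g₁ z + g₂ z) / ((1 - conj (g₁ z) * g₂ z) * (1 + (Complex.normSq (g₁ z) : ℂ))))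
          * (Complex.normSq (wzb g₁ z) : ℂ)

/-- The integrability condition (Ge2) at a point `z`. -/
def Ge2 (g₁ g₂ : ℂ → ℂ) (z : ℂ) : Prop :=
  0 = wz (wzb g₂) z
      + (conj (g₁ z) / (1 - conj (g₁ z) * g₂ z)
          - conj (g₂ z) / (1 + (Complex.normSq (g₂ z) : ℂ))) * wz g₂ z * wzb g₂ z
      + ((g₁ z + g₂ z) / ((1 - g₁ z * conj (g₂ z)) * (1 + (Complex.normSq (g₂ z) : ℂ))))
          * (Complex.normSq (wzb g₂ z) : ℂ)

/-- The function `f := −2i·conj(F)`. -/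
noncomputable def ffun (g₁ g₂ : ℂ → ℂ) (z : ℂ) : ℂ :=
  -2 * Complex.I * conj (Ffun g₁ g₂ z)

/-- The null curve `φ = f·(1 + g₁g₂, i(1 − g₁g₂), g₁ − g₂, −i(g₁ + g₂))`. -/
noncomputable def phi (g₁ g₂ : ℂ → ℂ) (z : ℂ) : Fin 4 → ℂ :=
  ![ffun g₁ g₂ z * (1 + g₁ z * g₂ z),
    ffun g₁ g₂ z * (Complex.I * (1 - g₁ z * g₂ z)),
    ffun g₁ g₂ z * (g₁ z - g₂ z),
    ffun g₁ g₂ z * (-Complex.I * (g₁ z + g₂ z))]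

/-- The conformal factor `Λ² = 4|f|²(1 + |g₁|²)(1 + |g₂|²)`. -/
noncomputable def lamSq (g₁ g₂ : ℂ → ℂ) (z : ℂ) : ℝ :=
  4 * Complex.normSq (ffun g₁ g₂ z) * (1 + Complex.normSq (g₁ z)) * (1 + Complex.normSq (g₂ z))

/-! ### Wirtinger calculus toolkit -/

lemma wz_congr {h g : ℂ → ℂ} {z : ℂ} (he : h =ᶠ[nhds z] g) : wz h z = wz g z := by
  unfold wz; rw [he.fderiv_eq]

lemma wzb_congr {h g : ℂ → ℂ} {z : ℂ} (he : h =ᶠ[nhds z] g) : wzb h z = wzb g z := by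
  unfold wzb; rw [he.fderiv_eq]

lemma wz_const (c z : ℂ) : wz (fun _ => c) z = 0 := by simp [wz, fderiv_const]

lemma wzb_const (c z : ℂ) : wzb (fun _ => c) z = 0 := by simp [wzb, fderiv_const]

lemma wz_mul {h g : ℂ → ℂ} {z : ℂ} (hh : DifferentiableAt ℝ h z)
    (hg : DifferentiableAt ℝ g z) :
    wz (fun w => h w * g w) z = wz h z * g z + h z * wz g z := by
  simp only [wz, fderiv_fun_mul hh hg, ContinuousLinearMap.add_apply,
    ContinuousLinearMap.smul_apply, smul_eq_mul]
  ring

lemma wzb_mul {h g : ℂ → ℂ} {z : ℂ} (hh : DifferentiableAt ℝ h z)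
    (hg : DifferentiableAt ℝ g z) :
    wzb (fun w => h w * g w) z = wzb h z * g z + h z * wzb g z := by
  simp only [wzb, fderiv_fun_mul hh hg, ContinuousLinearMap.add_apply,
    ContinuousLinearMap.smul_apply, smul_eq_mul]
  ring

lemma wz_const_add {h : ℂ → ℂ} {z : ℂ} (c : ℂ) : wz (fun w => c + h w) z = wz h z := by
  simp only [wz, fderiv_const_add]

lemma wzb_const_add {h : ℂ → ℂ} {z : ℂ} (c : ℂ) : wzb (fun w => c + h w) z = wzb h z := by
  simp only [wzb, fderiv_const_add]

lemma wz_const_sub {h : ℂ → ℂ} {z : ℂ} (hh : DifferentiableAt ℝ h z) (c : ℂ) :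
    wz (fun w => c - h w) z = -wz h z := by
  simp only [wz, fderiv_fun_sub (differentiableAt_const c) hh, ContinuousLinearMap.sub_apply,
    fderiv_const, fderiv_const_apply, Pi.zero_apply, ContinuousLinearMap.zero_apply]; ring

lemma wzb_const_sub {h : ℂ → ℂ} {z : ℂ} (hh : DifferentiableAt ℝ h z) (c : ℂ) :
    wzb (fun w => c - h w) z = -wzb h z := by
  simp only [wzb, fderiv_fun_sub (differentiableAt_const c) hh, ContinuousLinearMap.sub_apply,
    fderiv_const, fderiv_const_apply, Pi.zero_apply, ContinuousLinearMap.zero_apply]; ring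

lemma wz_const_mul {h : ℂ → ℂ} {z : ℂ} (hh : DifferentiableAt ℝ h z) (c : ℂ) :
    wz (fun w => c * h w) z = c * wz h z := by
  simp only [wz, fderiv_const_mul hh, ContinuousLinearMap.smul_apply, smul_eq_mul]; ring

lemma wzb_const_mul {h : ℂ → ℂ} {z : ℂ} (hh : DifferentiableAt ℝ h z) (c : ℂ) :
    wzb (fun w => c * h w) z = c * wzb h z := by
  simp only [wzb, fderiv_const_mul hh, ContinuousLinearMap.smul_apply, smul_eq_mul]; ring

lemma fderiv_conj_apply {h : ℂ → ℂ} {z : ℂ} (hd : DifferentiableAt ℝ h z) (v : ℂ) :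
    fderiv ℝ (fun w => conj (h w)) z v = conj (fderiv ℝ h z v) := by
  have := (Complex.conjCLE.toContinuousLinearMap.hasFDerivAt.comp z hd.hasFDerivAt).fderiv
  rw [show (fun w => conj (h w)) = (Complex.conjCLE.toContinuousLinearMap) ∘ h from rfl, this]
  rfl

lemma diff_conj {h : ℂ → ℂ} {z : ℂ} (hd : DifferentiableAt ℝ h z) :
    DifferentiableAt ℝ (fun w => conj (h w)) z :=
  Complex.conjCLE.differentiableAt.comp z hd

lemma wz_conj {h : ℂ → ℂ} {z : ℂ} (hd : DifferentiableAt ℝ h z) :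
    wz (fun w => conj (h w)) z = conj (wzb h z) := by
  simp only [wz, wzb, fderiv_conj_apply hd, map_mul, map_add, map_sub, map_div₀, map_one,
    map_ofNat, Complex.conj_I]
  ring

lemma wzb_conj {h : ℂ → ℂ} {z : ℂ} (hd : DifferentiableAt ℝ h z) :
    wzb (fun w => conj (h w)) z = conj (wz h z) := by
  simp only [wz, wzb, fderiv_conj_apply hd, map_mul, map_add, map_sub, map_div₀, map_one,
    map_ofNat, Complex.conj_I]
  ring

lemma wz_inv {h : ℂ → ℂ} {z : ℂ} (hd : DifferentiableAt ℝ h z)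
    (hx : h z ≠ 0) : wz (fun w => (h w)⁻¹) z = -(wz h z) * ((h z)^2)⁻¹ := by
  have hdi : DifferentiableAt ℝ (fun w => (h w)⁻¹) z := hd.inv hx
  have he : (fun w => h w * (h w)⁻¹) =ᶠ[nhds z] (fun _ => (1:ℂ)) := by
    filter_upwards [hd.continuousAt.eventually_ne hx] with w hw
    exact mul_inv_cancel₀ hw
  have h0 : wz (fun w => h w * (h w)⁻¹) z = 0 := (wz_congr he).trans (wz_const 1 z)
  rw [wz_mul hd hdi] at h0
  set W := wz (fun w => (h w)⁻¹) z with hW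
  field_simp
  field_simp at h0
  linear_combination h0

lemma wzb_inv {h : ℂ → ℂ} {z : ℂ} (hd : DifferentiableAt ℝ h z)
    (hx : h z ≠ 0) : wzb (fun w => (h w)⁻¹) z = -(wzb h z) * ((h z)^2)⁻¹ := by
  have hdi : DifferentiableAt ℝ (fun w => (h w)⁻¹) z := hd.inv hx
  have he : (fun w => h w * (h w)⁻¹) =ᶠ[nhds z] (fun _ => (1:ℂ)) := by
    filter_upwards [hd.continuousAt.eventually_ne hx] with w hw
    exact mul_inv_cancel₀ hw
  have h0 : wzb (fun w => h w * (h w)⁻¹) z = 0 := (wzb_congr he).trans (wzb_const 1 z)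
  rw [wzb_mul hd hdi] at h0
  set W := wzb (fun w => (h w)⁻¹) z with hW
  field_simp
  field_simp at h0
  linear_combination h0

lemma diff_fderiv_apply {h : ℂ → ℂ} {z : ℂ} (hh : ContDiffAt ℝ 2 h z) (v : ℂ) :
    DifferentiableAt ℝ (fun w => fderiv ℝ h w v) z := by
  have h1 : ContDiffAt ℝ 1 (fderiv ℝ h) z := hh.fderiv_right (by norm_num)
  exact (ContinuousLinearMap.apply ℝ ℂ v).differentiableAt.comp z (h1.differentiableAt (by norm_num))

lemma diff_wzb {h : ℂ → ℂ} {z : ℂ} (hh : ContDiffAt ℝ 2 h z) :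
    DifferentiableAt ℝ (wzb h) z := by
  show DifferentiableAt ℝ
    (fun w => (1/2 : ℂ) * (fderiv ℝ h w 1 + Complex.I * fderiv ℝ h w Complex.I)) z
  exact (((diff_fderiv_apply hh 1).add ((diff_fderiv_apply hh Complex.I).const_mul
    Complex.I)).const_mul _)

lemma one_sub_mul_conj_ne {u v : ℂ} (hu : ‖u‖ < 1) (hv : ‖v‖ < 1) :
    (1:ℂ) - u * conj v ≠ 0 := by
  intro h
  have h1 : u * conj v = 1 := by linear_combination -h
  have h2 := congrArg (‖·‖) h1
  simp only [norm_mul, Complex.norm_conj, norm_one] at h2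
  nlinarith [norm_nonneg u, norm_nonneg v]


lemma wzb_sub {h g : ℂ → ℂ} {z : ℂ} (hh : DifferentiableAt ℝ h z)
    (hg : DifferentiableAt ℝ g z) :
    wzb (fun w => h w - g w) z = wzb h z - wzb g z := by
  simp only [wzb, fderiv_fun_sub hh hg, ContinuousLinearMap.sub_apply]; ring

lemma wzb_add {h g : ℂ → ℂ} {z : ℂ} (hh : DifferentiableAt ℝ h z)
    (hg : DifferentiableAt ℝ g z) :
    wzb (fun w => h w + g w) z = wzb h z + wzb g z := by
  simp only [wzb, fderiv_fun_add hh hg, ContinuousLinearMap.add_apply]; ring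

set_option maxHeartbeats 4000000 in
/-- **(c4): the surface is a translator with velocity `−e₄`.** If `X : Ω → ℝ⁴` satisfies
`X_z = φ`, then its mean curvature vector `H = (4/Λ²)·X_{zz̄}` equals the projection of
`−e₄ = (0,0,0,−1)` orthogonal to the tangent plane:
`H = −e₄ + (1/Λ²)[⟨X_u, e₄⟩·X_u + ⟨X_v, e₄⟩·X_v]`. -/

theorem translator_velocity_neg_e4
    (Ω : Set ℂ) (hΩopen : IsOpen Ω) (hΩsc : SimplyConnectedSpace Ω)
    (g₁ g₂ : ℂ → ℂ)
    (hg₁ : ContDiffOn ℝ 2 g₁ Ω) (hg₂ : ContDiffOn ℝ 2 g₂ Ω)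
    (hd₁ : ∀ z ∈ Ω, ‖g₁ z‖ < 1) (hd₂ : ∀ z ∈ Ω, ‖g₂ z‖ < 1)
    (hnh₁ : ∀ z ∈ Ω, wzb g₁ z ≠ 0) (hnh₂ : ∀ z ∈ Ω, wzb g₂ z ≠ 0)
    (hCP : ∀ z ∈ Ω, CP g₁ g₂ z)
    (hGe1 : ∀ z ∈ Ω, Ge1 g₁ g₂ z)
    (X : ℂ → Fin 4 → ℝ)
    (hXreg : ∀ k : Fin 4, ContDiffOn ℝ 2 (fun w => X w k) Ω)
    (hXz : ∀ z ∈ Ω, ∀ k : Fin 4, wzR (fun w => X w k) z = phi g₁ g₂ z k) :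
    ∀ z ∈ Ω, ∀ k : Fin 4,
      (4 / (lamSq g₁ g₂ z : ℂ)) * wzb (fun w => wzR (fun w' => X w' k) w) z
        = (((if k = 3 then (-1 : ℝ) else 0)
            + (1 / lamSq g₁ g₂ z)
              * ((fderiv ℝ (fun w => X w 3) z 1) * (fderiv ℝ (fun w => X w k) z 1)
                + (fderiv ℝ (fun w => X w 3) z Complex.I)
                    * (fderiv ℝ (fun w => X w k) z Complex.I)) : ℝ) : ℂ) := by
  intro z hz k
  have hmem : Ω ∈ nhds z := hΩopen.mem_nhds hz
  have hc1 : ContDiffAt ℝ 2 g₁ z := hg₁.contDiffAt hmem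
  have hc2 : ContDiffAt ℝ 2 g₂ z := hg₂.contDiffAt hmem
  have hg1d : DifferentiableAt ℝ g₁ z := hc1.differentiableAt (by norm_num)
  have hg2d : DifferentiableAt ℝ g₂ z := hc2.differentiableAt (by norm_num)
  have hA1d : DifferentiableAt ℝ (wzb g₁) z := diff_wzb hc1
  have hcg1d : DifferentiableAt ℝ (fun w => conj (g₁ w)) z := diff_conj hg1d
  have hcg2d : DifferentiableAt ℝ (fun w => conj (g₂ w)) z := diff_conj hg2d
  -- nonvanishing denominators
  have hone1 : (1:ℂ) - g₁ z * conj (g₂ z) ≠ 0 := one_sub_mul_conj_ne (hd₁ z hz) (hd₂ z hz)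
  have hone2 : (1:ℂ) - conj (g₁ z) * g₂ z ≠ 0 := by
    have := one_sub_mul_conj_ne (u := conj (g₁ z)) (v := conj (g₂ z))
      (by simpa using hd₁ z hz) (by simpa using hd₂ z hz)
    simpa using this
  have hna : (1:ℂ) + g₁ z * conj (g₁ z) ≠ 0 := by
    rw [Complex.mul_conj]
    have h0 : (0:ℝ) < 1 + Complex.normSq (g₁ z) := by linarith [Complex.normSq_nonneg (g₁ z)]
    exact_mod_cast h0.ne'
  have hnb : (1:ℂ) + g₂ z * conj (g₂ z) ≠ 0 := by
    rw [Complex.mul_conj]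
    have h0 : (0:ℝ) < 1 + Complex.normSq (g₂ z) := by linarith [Complex.normSq_nonneg (g₂ z)]
    exact_mod_cast h0.ne'
  have hns1 : ((Complex.normSq (g₁ z) : ℝ) : ℂ) = g₁ z * conj (g₁ z) :=
    (Complex.mul_conj _).symm
  have hns2 : ((Complex.normSq (g₂ z) : ℝ) : ℂ) = g₂ z * conj (g₂ z) :=
    (Complex.mul_conj _).symm
  have hd1ne : (1 - g₁ z * conj (g₂ z)) * (1 + g₁ z * conj (g₁ z)) ≠ 0 := mul_ne_zero hone1 hna
  have hd2ne : (1 - conj (g₁ z) * g₂ z) * (1 + g₂ z * conj (g₂ z)) ≠ 0 := mul_ne_zero hone2 hnb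
  -- F and its basic identities
  have hF2 : Ffun g₁ g₂ z
      = wzb g₁ z / ((1 - g₁ z * conj (g₂ z)) * (1 + g₁ z * conj (g₁ z))) := by
    rw [show Ffun g₁ g₂ z = wzb g₁ z /
      ((1 - g₁ z * conj (g₂ z)) * (1 + (Complex.normSq (g₁ z) : ℂ))) from rfl, hns1]
  have hA : wzb g₁ z
      = Ffun g₁ g₂ z * ((1 - g₁ z * conj (g₂ z)) * (1 + g₁ z * conj (g₁ z))) := by
    rw [hF2, div_mul_cancel₀ _ hd1ne]
  have hp : Ffun g₁ g₂ z ≠ 0 := by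
    rw [hF2]; exact div_ne_zero (hnh₁ z hz) hd1ne
  have hF3 : Ffun g₁ g₂ z
      = wzb g₂ z / ((1 - conj (g₁ z) * g₂ z) * (1 + g₂ z * conj (g₂ z))) := by
    have h := hCP z hz
    rw [CP] at h
    rw [h, hns2]
  have hB : wzb g₂ z
      = Ffun g₁ g₂ z * ((1 - conj (g₁ z) * g₂ z) * (1 + g₂ z * conj (g₂ z))) := by
    rw [hF3, div_mul_cancel₀ _ hd2ne]
  -- derivative of the denominator
  have hS1d : DifferentiableAt ℝ (fun w => (1:ℂ) - g₁ w * conj (g₂ w)) z :=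
    (differentiableAt_const _).sub (hg1d.mul hcg2d)
  have hS2d : DifferentiableAt ℝ (fun w => (1:ℂ) + g₁ w * conj (g₁ w)) z :=
    (differentiableAt_const _).add (hg1d.mul hcg1d)
  have hDd : DifferentiableAt ℝ
      (fun w => ((1:ℂ) - g₁ w * conj (g₂ w)) * (1 + g₁ w * conj (g₁ w))) z := hS1d.mul hS2d
  have hwzS1 : wz (fun w => (1:ℂ) - g₁ w * conj (g₂ w)) z
      = -(wz g₁ z * conj (g₂ z) + g₁ z * conj (wzb g₂ z)) := by
    rw [wz_const_sub (h := fun w => g₁ w * conj (g₂ w)) (hg1d.mul hcg2d), wz_mul hg1d hcg2d, wz_conj hg2d]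
  have hwzS2 : wz (fun w => (1:ℂ) + g₁ w * conj (g₁ w)) z
      = wz g₁ z * conj (g₁ z) + g₁ z * conj (wzb g₁ z) := by
    rw [wz_const_add, wz_mul hg1d hcg1d, wz_conj hg1d]
  have hwzD : wz (fun w => ((1:ℂ) - g₁ w * conj (g₂ w)) * (1 + g₁ w * conj (g₁ w))) z
      = (-(wz g₁ z * conj (g₂ z) + g₁ z * conj (wzb g₂ z))) * (1 + g₁ z * conj (g₁ z))
        + (1 - g₁ z * conj (g₂ z)) * (wz g₁ z * conj (g₁ z) + g₁ z * conj (wzb g₁ z)) := by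
    rw [wz_mul hS1d hS2d, hwzS1, hwzS2]
  -- F as a product with an inverse
  have hFfun_eq : Ffun g₁ g₂
      = fun w => wzb g₁ w * (((1:ℂ) - g₁ w * conj (g₂ w)) * (1 + g₁ w * conj (g₁ w)))⁻¹ := by
    funext w
    rw [show Ffun g₁ g₂ w = wzb g₁ w /
      ((1 - g₁ w * conj (g₂ w)) * (1 + (Complex.normSq (g₁ w) : ℂ))) from rfl,
      div_eq_mul_inv, ← Complex.mul_conj]
  have hDzne : ((fun w => ((1:ℂ) - g₁ w * conj (g₂ w)) * (1 + g₁ w * conj (g₁ w))) z) ≠ 0 :=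
    hd1ne
  have hFd : DifferentiableAt ℝ (Ffun g₁ g₂) z := by
    rw [hFfun_eq]
    exact hA1d.mul (hDd.inv hDzne)
  -- wzb g₁ = F * D near z
  have hAD : wzb g₁ =ᶠ[nhds z] (fun w => Ffun g₁ g₂ w
      * ((1 - g₁ w * conj (g₂ w)) * (1 + g₁ w * conj (g₁ w)))) := by
    filter_upwards [hmem] with w hw
    have h1w : (1:ℂ) - g₁ w * conj (g₂ w) ≠ 0 := one_sub_mul_conj_ne (hd₁ w hw) (hd₂ w hw)
    have h3w : (1:ℂ) + g₁ w * conj (g₁ w) ≠ 0 := by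
      rw [Complex.mul_conj]
      have h0 : (0:ℝ) < 1 + Complex.normSq (g₁ w) := by linarith [Complex.normSq_nonneg (g₁ w)]
      exact_mod_cast h0.ne'
    have hF2w : Ffun g₁ g₂ w
        = wzb g₁ w / ((1 - g₁ w * conj (g₂ w)) * (1 + g₁ w * conj (g₁ w))) := by
      rw [show Ffun g₁ g₂ w = wzb g₁ w /
        ((1 - g₁ w * conj (g₂ w)) * (1 + (Complex.normSq (g₁ w) : ℂ))) from rfl,
        ← Complex.mul_conj]
    rw [hF2w, div_mul_cancel₀ _ (mul_ne_zero h1w h3w)]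
  have hproda : wz (wzb g₁) z
      = wz (Ffun g₁ g₂) z * ((1 - g₁ z * conj (g₂ z)) * (1 + g₁ z * conj (g₁ z)))
        + Ffun g₁ g₂ z * ((-(wz g₁ z * conj (g₂ z) + g₁ z * conj (wzb g₂ z)))
            * (1 + g₁ z * conj (g₁ z))
          + (1 - g₁ z * conj (g₂ z)) * (wz g₁ z * conj (g₁ z) + g₁ z * conj (wzb g₁ z))) := by
    rw [wz_congr hAD, wz_mul hFd hDd, hwzD]
  -- the Ge1 condition
  have hGe : (0:ℂ) = wz (wzb g₁) z
      + (conj (g₂ z) / (1 - g₁ z * conj (g₂ z))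
          - conj (g₁ z) / (1 + (Complex.normSq (g₁ z) : ℂ))) * wz g₁ z * wzb g₁ z
      + ((g₁ z + g₂ z) / ((1 - conj (g₁ z) * g₂ z) * (1 + (Complex.normSq (g₁ z) : ℂ))))
          * (Complex.normSq (wzb g₁ z) : ℂ) := hGe1 z hz
  have hnsA : ((Complex.normSq (wzb g₁ z) : ℝ) : ℂ) = wzb g₁ z * conj (wzb g₁ z) :=
    (Complex.mul_conj _).symm
  rw [hns1, hnsA] at hGe
  -- the key computation of wz F
  have hkey : wz (Ffun g₁ g₂) z
      = Ffun g₁ g₂ z * conj (Ffun g₁ g₂ z)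
        * (g₁ z * (g₂ z * conj (g₂ z) - 1) + g₂ z * (g₁ z * conj (g₁ z) - 1)) := by
    rw [hA] at hproda hGe
    rw [hB] at hproda
    simp only [map_mul, map_sub, map_add, map_one, Complex.conj_conj] at hproda hGe
    have hd : (1 - g₁ z * conj (g₂ z))^2 * (1 - conj (g₁ z) * g₂ z)
        * (1 + g₁ z * conj (g₁ z))^3 ≠ 0 :=
      mul_ne_zero (mul_ne_zero (pow_ne_zero 2 hone1) hone2) (pow_ne_zero 3 hna)
    apply mul_left_cancel₀ hd
    linear_combination (norm := skip) (-((1 - g₁ z * conj (g₂ z)) * (1 - conj (g₁ z) * g₂ z)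
      * (1 + g₁ z * conj (g₁ z))^2)) * hproda - ((1 - g₁ z * conj (g₂ z)) * (1 - conj (g₁ z) * g₂ z)
      * (1 + g₁ z * conj (g₁ z))^2) * hGe
    field_simp
    ring
  -- derivative of f
  have hfz : ffun g₁ g₂ z = -2 * Complex.I * conj (Ffun g₁ g₂ z) := rfl
  have hfd : DifferentiableAt ℝ (ffun g₁ g₂) z := by
    rw [show ffun g₁ g₂ = fun w => -2 * Complex.I * conj (Ffun g₁ g₂ w) from rfl]
    exact (diff_conj hFd).const_mul _
  have hwzbf : wzb (ffun g₁ g₂) z = -2 * Complex.I * conj (wz (Ffun g₁ g₂) z) := by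
    rw [show ffun g₁ g₂ = fun w => -2 * Complex.I * conj (Ffun g₁ g₂ w) from rfl,
      wzb_const_mul (diff_conj hFd), wzb_conj hFd]
  have hwzbf2 : wzb (ffun g₁ g₂) z
      = -2 * Complex.I * (conj (Ffun g₁ g₂ z) * Ffun g₁ g₂ z
        * (conj (g₁ z) * (conj (g₂ z) * g₂ z - 1) + conj (g₂ z) * (conj (g₁ z) * g₁ z - 1))) := by
    rw [hwzbf, hkey]
    simp only [map_mul, map_sub, map_add, map_one, Complex.conj_conj]
  -- conformal factor
  have hf0 : ffun g₁ g₂ z ≠ 0 := by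
    rw [hfz]
    refine mul_ne_zero (mul_ne_zero (by norm_num) Complex.I_ne_zero) ?_
    intro hc
    exact hp (by simpa using congrArg conj hc)
  have hlpos : 0 < lamSq g₁ g₂ z := by
    show 0 < 4 * Complex.normSq (ffun g₁ g₂ z)
      * (1 + Complex.normSq (g₁ z)) * (1 + Complex.normSq (g₂ z))
    have h1 : 0 < Complex.normSq (ffun g₁ g₂ z) := Complex.normSq_pos.mpr hf0
    have h2 : (0:ℝ) ≤ Complex.normSq (g₁ z) := Complex.normSq_nonneg _
    have h3 : (0:ℝ) ≤ Complex.normSq (g₂ z) := Complex.normSq_nonneg _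
    have h4 : (0:ℝ) < 1 + Complex.normSq (g₁ z) := by linarith
    have h5 : (0:ℝ) < 1 + Complex.normSq (g₂ z) := by linarith
    have := mul_pos (mul_pos (mul_pos (by norm_num : (0:ℝ) < 4) h1) h4) h5
    linarith
  have hlne : ((lamSq g₁ g₂ z : ℝ) : ℂ) ≠ 0 := by exact_mod_cast hlpos.ne'
  have hlC : ((lamSq g₁ g₂ z : ℝ) : ℂ)
      = 16 * (Ffun g₁ g₂ z * conj (Ffun g₁ g₂ z))
        * (1 + g₁ z * conj (g₁ z)) * (1 + g₂ z * conj (g₂ z)) := by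
    rw [show lamSq g₁ g₂ z = 4 * Complex.normSq (ffun g₁ g₂ z)
      * (1 + Complex.normSq (g₁ z)) * (1 + Complex.normSq (g₂ z)) from rfl]
    push_cast
    rw [← Complex.mul_conj, ← Complex.mul_conj, ← Complex.mul_conj, hfz]
    simp only [map_mul, map_neg, map_ofNat, Complex.conj_I, Complex.conj_conj]
    linear_combination (-16 * (Ffun g₁ g₂ z) * (conj (Ffun g₁ g₂ z))
      * (1 + g₁ z * conj (g₁ z)) * (1 + g₂ z * conj (g₂ z))) * Complex.I_sq
  -- first derivatives of X
  have hX1 : ∀ j : Fin 4,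
      ((fderiv ℝ (fun w => X w j) z 1 : ℝ) : ℂ)
        = phi g₁ g₂ z j + conj (phi g₁ g₂ z j) ∧
      ((fderiv ℝ (fun w => X w j) z Complex.I : ℝ) : ℂ)
        = Complex.I * (phi g₁ g₂ z j - conj (phi g₁ g₂ z j)) := by
    intro j
    have h : (1/2 : ℂ) * (((fderiv ℝ (fun w => X w j) z 1 : ℝ) : ℂ)
        - Complex.I * ((fderiv ℝ (fun w => X w j) z Complex.I : ℝ) : ℂ))
        = phi g₁ g₂ z j := hXz z hz j
    have hcj := congrArg conj h
    simp only [map_mul, map_sub, map_one, map_div₀, map_ofNat, Complex.conj_ofReal,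
      Complex.conj_I] at hcj
    constructor
    · linear_combination h + hcj
    · linear_combination Complex.I * h - Complex.I * hcj
        + ((fderiv ℝ (fun w => X w j) z Complex.I : ℝ) : ℂ) * Complex.I_sq
  -- values of phi
  have hphi0 : phi g₁ g₂ z 0
      = -2 * Complex.I * conj (Ffun g₁ g₂ z) * (1 + g₁ z * g₂ z) := rfl
  have hphi1 : phi g₁ g₂ z 1
      = -2 * Complex.I * conj (Ffun g₁ g₂ z) * (Complex.I * (1 - g₁ z * g₂ z)) := rfl
  have hphi2 : phi g₁ g₂ z 2
      = -2 * Complex.I * conj (Ffun g₁ g₂ z) * (g₁ z - g₂ z) := rfl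
  have hphi3 : phi g₁ g₂ z 3
      = -2 * Complex.I * conj (Ffun g₁ g₂ z) * (-Complex.I * (g₁ z + g₂ z)) := rfl
  -- the eventual equality with phi
  have heq : ∀ j : Fin 4, (fun w => wzR (fun w' => X w' j) w)
      =ᶠ[nhds z] (fun w => phi g₁ g₂ w j) := by
    intro j
    filter_upwards [hmem] with w hw using hXz w hw j
  have hde0 : DifferentiableAt ℝ (fun w => (1:ℂ) + g₁ w * g₂ w) z :=
    (differentiableAt_const _).add (hg1d.mul hg2d)
  have hde2 : DifferentiableAt ℝ (fun w => g₁ w - g₂ w) z := hg1d.sub hg2d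
  have hde3' : DifferentiableAt ℝ (fun w => g₁ w + g₂ w) z := hg1d.add hg2d
  have hwe0 : wzb (fun w => (1:ℂ) + g₁ w * g₂ w) z = wzb g₁ z * g₂ z + g₁ z * wzb g₂ z := by
    rw [wzb_const_add, wzb_mul hg1d hg2d]
  fin_cases k <;> simp only [Fin.zero_eta, Fin.mk_one, Fin.reduceFinMk]
  · -- k = 0
    have hW : wzb (fun w => wzR (fun w' => X w' 0) w) z
        = wzb (ffun g₁ g₂) z * (1 + g₁ z * g₂ z)
          + ffun g₁ g₂ z * (wzb g₁ z * g₂ z + g₁ z * wzb g₂ z) := by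
      rw [wzb_congr (heq 0),
        show (fun w => phi g₁ g₂ w 0) = fun w => ffun g₁ g₂ w * (1 + g₁ w * g₂ w) from rfl,
        wzb_mul hfd hde0, hwe0]
    rw [hW, hwzbf2, hfz, hA, hB, if_neg (by decide : ¬(0 : Fin 4) = 3)]
    rw [div_mul_eq_mul_div, div_eq_iff hlne, ← Complex.ofReal_mul,
      show ((0:ℝ) + 1 / lamSq g₁ g₂ z
          * (fderiv ℝ (fun w => X w 3) z 1 * fderiv ℝ (fun w => X w 0) z 1
            + fderiv ℝ (fun w => X w 3) z Complex.I * fderiv ℝ (fun w => X w 0) z Complex.I))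
          * lamSq g₁ g₂ z
        = fderiv ℝ (fun w => X w 3) z 1 * fderiv ℝ (fun w => X w 0) z 1
            + fderiv ℝ (fun w => X w 3) z Complex.I * fderiv ℝ (fun w => X w 0) z Complex.I
        from by field_simp [hlpos.ne']; ring]
    push_cast
    rw [(hX1 0).1, (hX1 0).2, (hX1 3).1, (hX1 3).2, hphi0, hphi3]
    simp only [map_mul, map_neg, map_add, map_sub, map_one, map_ofNat, Complex.conj_I,
      Complex.conj_conj]
    linear_combination (4*(conj (Ffun g₁ g₂ z))*(conj (Ffun g₁ g₂ z))*(g₂ z)*Complex.I*Complex.I*Complex.I + 4*(conj (Ffun g₁ g₂ z))*(conj (Ffun g₁ g₂ z))*(g₁ z)*Complex.I*Complex.I*Complex.I + 4*(conj (Ffun g₁ g₂ z))*(conj (Ffun g₁ g₂ z))*(g₁ z)*(g₂ z)*(g₂ z)*Complex.I*Complex.I*Complex.I + 4*(conj (Ffun g₁ g₂ z))*(conj (Ffun g₁ g₂ z))*(g₁ z)*(g₁ z)*(g₂ z)*Complex.I*Complex.I*Complex.I + 8*(Ffun g₁ g₂ z)*(conj (Ffun g₁ g₂ z))*(conj (g₂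 z))*Complex.I - 4*(Ffun g₁ g₂ z)*(conj (Ffun g₁ g₂ z))*(conj (g₂ z))*Complex.I*Complex.I*Complex.I - 8*(Ffun g₁ g₂ z)*(conj (Ffun g₁ g₂ z))*(g₂ z)*Complex.I + 4*(Ffun g₁ g₂ z)*(conj (Ffun g₁ g₂ z))*(g₂ z)*Complex.I*Complex.I*Complex.I + 8*(Ffun g₁ g₂ z)*(conj (Ffun g₁ g₂ z))*(conj (g₁ z))*Complex.I - 4*(Ffun g₁ g₂ z)*(conj (Ffun g₁ g₂ z))*(conj (g₁ z))*Complex.I*Complex.I*Complex.I - 8*(Ffun g₁ g₂ z)*(conj (Ffun g₁ g₂ z))*(conj (g₁ z))*(g₂ z)*(conj (g₂ z))*Complex.I + 4*(Ffun g₁ g₂ z)*(conj (Ffun g₁ g₂ z))*(conj (g₁ z))*(g₂ z)*(conj (g₂ z))*Complex.I*Complex.I*Complex.I - 8*(Ffun g₁ g₂ z)*(conj (Ffun g₁ g₂ z))*(g₁ z)*Complex.I + 4*(Ffun g₁ g₂ z)*(conj (Ffun g₁ g₂ z))*(g₁ z)*Complex.I*Complex.I*Complex.I + 8*(Ffun g₁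 g₂ z)*(conj (Ffun g₁ g₂ z))*(g₁ z)*(g₂ z)*(conj (g₂ z))*Complex.I - 4*(Ffun g₁ g₂ z)*(conj (Ffun g₁ g₂ z))*(g₁ z)*(g₂ z)*(conj (g₂ z))*Complex.I*Complex.I*Complex.I - 8*(Ffun g₁ g₂ z)*(conj (Ffun g₁ g₂ z))*(g₁ z)*(conj (g₁ z))*(conj (g₂ z))*Complex.I + 4*(Ffun g₁ g₂ z)*(conj (Ffun g₁ g₂ z))*(g₁ z)*(conj (g₁ z))*(conj (g₂ z))*Complex.I*Complex.I*Complex.I + 8*(Ffun g₁ g₂ z)*(conj (Ffun g₁ g₂ z))*(g₁ z)*(conj (g₁ z))*(g₂ z)*Complex.I - 4*(Ffun g₁ g₂ z)*(conj (Ffun g₁ g₂ z))*(g₁ z)*(conj (g₁ z))*(g₂ z)*Complex.I*Complex.I*Complex.I - 4*(Ffun g₁ g₂ z)*(Ffun g₁ g₂ z)*(conj (g₂ z))*Complex.I*Complex.I*Complex.I - 4*(Ffun g₁ g₂ z)*(Ffun g₁ g₂ z)*(conj (g₁ z))*Complex.I*Complex.I*Complex.I - 4*(Ffun g₁ g₂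 z)*(Ffun g₁ g₂ z)*(conj (g₁ z))*(conj (g₂ z))*(conj (g₂ z))*Complex.I*Complex.I*Complex.I - 4*(Ffun g₁ g₂ z)*(Ffun g₁ g₂ z)*(conj (g₁ z))*(conj (g₁ z))*(conj (g₂ z))*Complex.I*Complex.I*Complex.I) * Complex.I_sq
  · -- k = 1
    have hW : wzb (fun w => wzR (fun w' => X w' 1) w) z
        = wzb (ffun g₁ g₂) z * (Complex.I * (1 - g₁ z * g₂ z))
          + ffun g₁ g₂ z * (Complex.I * -(wzb g₁ z * g₂ z + g₁ z * wzb g₂ z)) := by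
      rw [wzb_congr (heq 1),
        show (fun w => phi g₁ g₂ w 1)
          = fun w => ffun g₁ g₂ w * (Complex.I * (1 - g₁ w * g₂ w)) from rfl,
        wzb_mul (g := fun w => Complex.I * (1 - g₁ w * g₂ w)) hfd ((((differentiableAt_const _).sub (hg1d.mul hg2d))).const_mul Complex.I),
        wzb_const_mul (h := fun w => 1 - g₁ w * g₂ w) ((differentiableAt_const _).sub (hg1d.mul hg2d)),
        wzb_const_sub (h := fun w => g₁ w * g₂ w) (hg1d.mul hg2d), wzb_mul hg1d hg2d]
    rw [hW, hwzbf2, hfz, hA, hB, if_neg (by decide : ¬(1 : Fin 4) = 3)]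
    rw [div_mul_eq_mul_div, div_eq_iff hlne, ← Complex.ofReal_mul,
      show ((0:ℝ) + 1 / lamSq g₁ g₂ z
          * (fderiv ℝ (fun w => X w 3) z 1 * fderiv ℝ (fun w => X w 1) z 1
            + fderiv ℝ (fun w => X w 3) z Complex.I * fderiv ℝ (fun w => X w 1) z Complex.I))
          * lamSq g₁ g₂ z
        = fderiv ℝ (fun w => X w 3) z 1 * fderiv ℝ (fun w => X w 1) z 1
            + fderiv ℝ (fun w => X w 3) z Complex.I * fderiv ℝ (fun w => X w 1) z Complex.I
        from by field_simp [hlpos.ne']; ring]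
    push_cast
    rw [(hX1 1).1, (hX1 1).2, (hX1 3).1, (hX1 3).2, hphi1, hphi3]
    simp only [map_mul, map_neg, map_add, map_sub, map_one, map_ofNat, Complex.conj_I,
      Complex.conj_conj]
    linear_combination (4*(conj (Ffun g₁ g₂ z))*(conj (Ffun g₁ g₂ z))*(g₂ z)*Complex.I*Complex.I*Complex.I*Complex.I + 4*(conj (Ffun g₁ g₂ z))*(conj (Ffun g₁ g₂ z))*(g₁ z)*Complex.I*Complex.I*Complex.I*Complex.I - 4*(conj (Ffun g₁ g₂ z))*(conj (Ffun g₁ g₂ z))*(g₁ z)*(g₂ z)*(g₂ z)*Complex.I*Complex.I*Complex.I*Complex.I - 4*(conj (Ffun g₁ g₂ z))*(conj (Ffun g₁ g₂ z))*(g₁ z)*(g₁ z)*(g₂ z)*Complex.I*Complex.I*Complex.I*Complex.I + 8*(Ffun g₁ g₂ z)*(conj (Ffun g₁ g₂ z))*(conj (g₂ z))*Complex.I*Complex.I - 4*(Ffun g₁ g₂ z)*(conj (Ffun g₁ g₂ z))*(conj (g₂ z))*Complex.I*Complex.I*Complex.I*Complex.I + 8*(Ffun g₁ g₂ z)*(conj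 (Ffun g₁ g₂ z))*(g₂ z)*Complex.I*Complex.I - 4*(Ffun g₁ g₂ z)*(conj (Ffun g₁ g₂ z))*(g₂ z)*Complex.I*Complex.I*Complex.I*Complex.I + 8*(Ffun g₁ g₂ z)*(conj (Ffun g₁ g₂ z))*(conj (g₁ z))*Complex.I*Complex.I - 4*(Ffun g₁ g₂ z)*(conj (Ffun g₁ g₂ z))*(conj (g₁ z))*Complex.I*Complex.I*Complex.I*Complex.I - 8*(Ffun g₁ g₂ z)*(conj (Ffun g₁ g₂ z))*(conj (g₁ z))*(g₂ z)*(conj (g₂ z))*Complex.I*Complex.I + 4*(Ffun g₁ g₂ z)*(conj (Ffun g₁ g₂ z))*(conj (g₁ z))*(g₂ z)*(conj (g₂ z))*Complex.I*Complex.I*Complex.I*Complex.I + 8*(Ffun g₁ g₂ z)*(conj (Ffun g₁ g₂ z))*(g₁ z)*Complex.I*Complex.I - 4*(Ffun g₁ g₂ z)*(conj (Ffun g₁ g₂ z))*(g₁ z)*Complex.I*Complex.I*Complex.I*Complex.I - 8*(Ffun g₁ g₂ z)*(conj (Ffun g₁ g₂ z))*(g₁ z)*(g₂ z)*(conj (g₂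 z))*Complex.I*Complex.I + 4*(Ffun g₁ g₂ z)*(conj (Ffun g₁ g₂ z))*(g₁ z)*(g₂ z)*(conj (g₂ z))*Complex.I*Complex.I*Complex.I*Complex.I - 8*(Ffun g₁ g₂ z)*(conj (Ffun g₁ g₂ z))*(g₁ z)*(conj (g₁ z))*(conj (g₂ z))*Complex.I*Complex.I + 4*(Ffun g₁ g₂ z)*(conj (Ffun g₁ g₂ z))*(g₁ z)*(conj (g₁ z))*(conj (g₂ z))*Complex.I*Complex.I*Complex.I*Complex.I - 8*(Ffun g₁ g₂ z)*(conj (Ffun g₁ g₂ z))*(g₁ z)*(conj (g₁ z))*(g₂ z)*Complex.I*Complex.I + 4*(Ffun g₁ g₂ z)*(conj (Ffun g₁ g₂ z))*(g₁ z)*(conj (g₁ z))*(g₂ z)*Complex.I*Complex.I*Complex.I*Complex.I + 4*(Ffun g₁ g₂ z)*(Ffun g₁ g₂ z)*(conj (g₂ z))*Complex.I*Complex.I*Complex.I*Complex.I + 4*(Ffun g₁ g₂ z)*(Ffun g₁ g₂ z)*(conj (g₁ z))*Complex.I*Complex.I*Complex.I*Complex.I - 4*(Ffun g₁ g₂ z)*(Ffun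 g₁ g₂ z)*(conj (g₁ z))*(conj (g₂ z))*(conj (g₂ z))*Complex.I*Complex.I*Complex.I*Complex.I - 4*(Ffun g₁ g₂ z)*(Ffun g₁ g₂ z)*(conj (g₁ z))*(conj (g₁ z))*(conj (g₂ z))*Complex.I*Complex.I*Complex.I*Complex.I) * Complex.I_sq
  · -- k = 2
    have hW : wzb (fun w => wzR (fun w' => X w' 2) w) z
        = wzb (ffun g₁ g₂) z * (g₁ z - g₂ z)
          + ffun g₁ g₂ z * (wzb g₁ z - wzb g₂ z) := by
      rw [wzb_congr (heq 2),
        show (fun w => phi g₁ g₂ w 2) = fun w => ffun g₁ g₂ w * (g₁ w - g₂ w) from rfl,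
        wzb_mul hfd hde2, wzb_sub hg1d hg2d]
    rw [hW, hwzbf2, hfz, hA, hB, if_neg (by decide : ¬(2 : Fin 4) = 3)]
    rw [div_mul_eq_mul_div, div_eq_iff hlne, ← Complex.ofReal_mul,
      show ((0:ℝ) + 1 / lamSq g₁ g₂ z
          * (fderiv ℝ (fun w => X w 3) z 1 * fderiv ℝ (fun w => X w 2) z 1
            + fderiv ℝ (fun w => X w 3) z Complex.I * fderiv ℝ (fun w => X w 2) z Complex.I))
          * lamSq g₁ g₂ z
        = fderiv ℝ (fun w => X w 3) z 1 * fderiv ℝ (fun w => X w 2) z 1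
            + fderiv ℝ (fun w => X w 3) z Complex.I * fderiv ℝ (fun w => X w 2) z Complex.I
        from by field_simp [hlpos.ne']; ring]
    push_cast
    rw [(hX1 2).1, (hX1 2).2, (hX1 3).1, (hX1 3).2, hphi2, hphi3]
    simp only [map_mul, map_neg, map_add, map_sub, map_one, map_ofNat, Complex.conj_I,
      Complex.conj_conj]
    linear_combination (-4*(conj (Ffun g₁ g₂ z))*(conj (Ffun g₁ g₂ z))*(g₂ z)*(g₂ z)*Complex.I*Complex.I*Complex.I + 4*(conj (Ffun g₁ g₂ z))*(conj (Ffun g₁ g₂ z))*(g₁ z)*(g₁ z)*Complex.I*Complex.I*Complex.I - 16*(Ffun g₁ g₂ z)*(conj (Ffun g₁ g₂ z))*(conj (g₁ z))*(g₂ z)*Complex.I + 8*(Ffun g₁ g₂ z)*(conj (Ffun g₁ g₂ z))*(conj (g₁ z))*(g₂ z)*Complex.I*Complex.I*Complex.I + 16*(Ffun g₁ g₂ z)*(conj (Ffun g₁ g₂ z))*(g₁ z)*(conj (g₂ z))*Complex.I - 8*(Ffun g₁ g₂ z)*(conj (Ffun g₁ g₂ z))*(g₁ z)*(conj (g₂ z))*Complex.I*Complex.I*Complex.I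 + 4*(Ffun g₁ g₂ z)*(Ffun g₁ g₂ z)*(conj (g₂ z))*(conj (g₂ z))*Complex.I*Complex.I*Complex.I - 4*(Ffun g₁ g₂ z)*(Ffun g₁ g₂ z)*(conj (g₁ z))*(conj (g₁ z))*Complex.I*Complex.I*Complex.I) * Complex.I_sq
  · -- k = 3
    have hW : wzb (fun w => wzR (fun w' => X w' 3) w) z
        = wzb (ffun g₁ g₂) z * (-Complex.I * (g₁ z + g₂ z))
          + ffun g₁ g₂ z * (-Complex.I * (wzb g₁ z + wzb g₂ z)) := by
      rw [wzb_congr (heq 3),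
        show (fun w => phi g₁ g₂ w 3)
          = fun w => ffun g₁ g₂ w * (-Complex.I * (g₁ w + g₂ w)) from rfl,
        wzb_mul hfd (hde3'.const_mul (-Complex.I)),
        wzb_const_mul hde3', wzb_add hg1d hg2d]
    rw [hW, hwzbf2, hfz, hA, hB, if_pos trivial]
    rw [div_mul_eq_mul_div, div_eq_iff hlne, ← Complex.ofReal_mul,
      show ((-1:ℝ) + 1 / lamSq g₁ g₂ z
          * (fderiv ℝ (fun w => X w 3) z 1 * fderiv ℝ (fun w => X w 3) z 1
            + fderiv ℝ (fun w => X w 3) z Complex.I * fderiv ℝ (fun w => X w 3) z Complex.I))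
          * lamSq g₁ g₂ z
        = -lamSq g₁ g₂ z + (fderiv ℝ (fun w => X w 3) z 1 * fderiv ℝ (fun w => X w 3) z 1
            + fderiv ℝ (fun w => X w 3) z Complex.I * fderiv ℝ (fun w => X w 3) z Complex.I)
        from by field_simp [hlpos.ne']]
    push_cast
    rw [(hX1 3).1, (hX1 3).2, hphi3, hlC]
    simp only [map_mul, map_neg, map_add, map_sub, map_one, map_ofNat, Complex.conj_I,
      Complex.conj_conj]
    linear_combination (-4*(conj (Ffun g₁ g₂ z))*(conj (Ffun g₁ g₂ z))*(g₂ z)*(g₂ z)*Complex.I*Complex.I*Complex.I*Complex.I - 8*(conj (Ffun g₁ g₂ z))*(conj (Ffun g₁ g₂ z))*(g₁ z)*(g₂ z)*Complex.I*Complex.I*Complex.I*Complex.I - 4*(conj (Ffun g₁ g₂ z))*(conj (Ffun g₁ g₂ z))*(g₁ z)*(g₁ z)*Complex.I*Complex.I*Complex.I*Complex.I + 16*(Ffun g₁ g₂ z)*(conj (Ffun g₁ g₂ z)) + 16*(Ffun g₁ g₂ z)*(conj (Ffun g₁ g₂ z))*(g₂ z)*(conj (g₂ z)) - 16*(Ffun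 g₁ g₂ z)*(conj (Ffun g₁ g₂ z))*(g₂ z)*(conj (g₂ z))*Complex.I*Complex.I + 8*(Ffun g₁ g₂ z)*(conj (Ffun g₁ g₂ z))*(g₂ z)*(conj (g₂ z))*Complex.I*Complex.I*Complex.I*Complex.I - 16*(Ffun g₁ g₂ z)*(conj (Ffun g₁ g₂ z))*(conj (g₁ z))*(g₂ z)*Complex.I*Complex.I + 8*(Ffun g₁ g₂ z)*(conj (Ffun g₁ g₂ z))*(conj (g₁ z))*(g₂ z)*Complex.I*Complex.I*Complex.I*Complex.I - 16*(Ffun g₁ g₂ z)*(conj (Ffun g₁ g₂ z))*(g₁ z)*(conj (g₂ z))*Complex.I*Complex.I + 8*(Ffun g₁ g₂ z)*(conj (Ffun g₁ g₂ z))*(g₁ z)*(conj (g₂ z))*Complex.I*Complex.I*Complex.I*Complex.I + 16*(Ffun g₁ g₂ z)*(conj (Ffun g₁ g₂ z))*(g₁ z)*(conj (g₁ z)) - 16*(Ffun g₁ g₂ z)*(conj (Ffun g₁ g₂ z))*(g₁ z)*(conj (g₁ z))*Complex.I*Complex.I + 8*(Ffun g₁ g₂ z)*(conj (Ffun g₁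 g₂ z))*(g₁ z)*(conj (g₁ z))*Complex.I*Complex.I*Complex.I*Complex.I + 16*(Ffun g₁ g₂ z)*(conj (Ffun g₁ g₂ z))*(g₁ z)*(conj (g₁ z))*(g₂ z)*(conj (g₂ z)) - 4*(Ffun g₁ g₂ z)*(Ffun g₁ g₂ z)*(conj (g₂ z))*(conj (g₂ z))*Complex.I*Complex.I*Complex.I*Complex.I - 8*(Ffun g₁ g₂ z)*(Ffun g₁ g₂ z)*(conj (g₁ z))*(conj (g₂ z))*Complex.I*Complex.I*Complex.I*Complex.I - 4*(Ffun g₁ g₂ z)*(Ffun g₁ g₂ z)*(conj (g₁ z))*(conj (g₁ z))*Complex.I*Complex.I*Complex.I*Complex.I) * Complex.I_sq
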